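/- Let n ≥ 1, Σ ∈ S_n, Θ ∈ A_n, and suppose the complex Hermitian matrix S := Σ + (i/2)Θ is positive definite. If R ∈ S_n is such that K(R) := ΣRΣ + ΘRΘ/4 is positive semi-definite, then R is positive semi-definite. Equivalently, the inverse operator K⁻¹ maps the cone of positive semi-definite real symmetric n×n matrices into itself. -/

import Mathlib

open Matrix ComplexOrder

lemma map_conjTranspose_real {m k : ℕ} (B : Matrix (Fin m) (Fin k) ℝ) :
    (B.map Complex.ofReal)ᴴ = Bᵀ.map Complex.ofReal := by
  ext i j
  simp [Matrix.conjTranspose_apply, Matrix.map_apply, Complex.conj_ofReal]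

lemma posSemidef_map_ofReal {m : ℕ} {M : Matrix (Fin m) (Fin m) ℝ}
    (h : M.PosSemidef) : (M.map Complex.ofReal).PosSemidef := by
  open scoped MatrixOrder in
  obtain ⟨X, hX, -, hM⟩ := CFC.exists_sqrt_of_isSelfAdjoint_of_quasispectrumRestricts
    h.isHermitian (QuasispectrumRestricts.nnreal_of_nonneg h.nonneg)
  obtain ⟨B, rfl⟩ : ∃ B : Matrix (Fin m) (Fin m) ℝ, M = Bᴴ * B :=
    ⟨X, by rw [← hM]; exact congrArg (· * X) hX.symm⟩
  have hmm : (Bᴴ * B).map Complex.ofReal = (B.map Complex.ofReal)ᴴ * (B.map Complex.ofReal) := by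
    ext i j
    simp only [Matrix.map_apply, Matrix.mul_apply, Matrix.conjTranspose_apply,
      Matrix.map_apply, Complex.star_def, Complex.conj_ofReal, star_trivial]
    push_cast
    rfl
  rw [hmm]
  exact Matrix.posSemidef_conjTranspose_mul_self _

lemma posSemidef_of_map_ofReal {m : ℕ} {M : Matrix (Fin m) (Fin m) ℝ}
    (hM : M.IsSymm) (h : (M.map Complex.ofReal).PosSemidef) : M.PosSemidef := by
  refine Matrix.PosSemidef.of_dotProduct_mulVec_nonneg ?_ ?_
  · show Mᴴ = M
    have : Mᴴ = Mᵀ := by ext i j; simp [Matrix.conjTranspose_apply]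
    rw [this, hM]
  · intro x
    have := h.dotProduct_mulVec_nonneg (fun i => (x i : ℂ))
    have key : star (fun i => (x i : ℂ)) ⬝ᵥ (M.map Complex.ofReal) *ᵥ (fun i => (x i : ℂ))
        = ((star x ⬝ᵥ M *ᵥ x : ℝ) : ℂ) := by
      simp only [dotProduct, Matrix.mulVec, Matrix.map_apply, Pi.star_apply,
        Complex.star_def, Complex.conj_ofReal]
      push_cast
      rfl
    rw [key] at this
    exact_mod_cast this

/-- Appendix D of the paper: positiveness of `K⁻¹` with respect to the cone of
positive semidefinite matrices.  If `S = Σ + (i/2)Θ` is positive definite and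
`R` is a real symmetric matrix such that `K(R) = ΣRΣ + ΘRΘ/4` is positive
semidefinite, then `R` itself is positive semidefinite; equivalently,
`K⁻¹(S_n⁺) ⊆ S_n⁺`. -/
theorem Kinv_maps_psd_cone_into_itself
    {n : ℕ} (hn : 1 ≤ n)
    (Sgm Θ : Matrix (Fin n) (Fin n) ℝ)
    (hSgmSymm : Sgm.IsSymm) (hΘ : Θᵀ = -Θ)
    (hS : (Sgm.map (Complex.ofReal) +
      (Complex.I / 2) • Θ.map (Complex.ofReal)).PosDef)
    (R : Matrix (Fin n) (Fin n) ℝ) (hR : R.IsSymm)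
    (hKR : (Sgm * R * Sgm + (1 / 4 : ℝ) • (Θ * R * Θ)).PosSemidef) :
    R.PosSemidef := by
  classical
  set Sc : Matrix (Fin n) (Fin n) ℂ := Sgm.map Complex.ofReal with hSc
  set Θc : Matrix (Fin n) (Fin n) ℂ := Θ.map Complex.ofReal with hΘc
  set Rc : Matrix (Fin n) (Fin n) ℂ := R.map Complex.ofReal with hRc
  set A : Matrix (Fin n) (Fin n) ℂ := Sc + (Complex.I / 2) • Θc with hA
  -- transposes
  have hScT : Scᵀ = Sc := by
    rw [hSc, ← Matrix.transpose_map, hSgmSymm]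
  have hΘcT : Θcᵀ = -Θc := by
    rw [hΘc, ← Matrix.transpose_map, hΘ]; ext i j; simp [Matrix.map_apply]
  have hAT : Aᵀ = Sc - (Complex.I / 2) • Θc := by
    rw [hA, Matrix.transpose_add, Matrix.transpose_smul, hScT, hΘcT, smul_neg, sub_eq_add_neg]
  have hBpd : (Aᵀ).PosDef := hS.transpose
  have hApd : A.PosDef := hS
  -- the key algebraic identity
  have hKRid : A * Rc * Aᵀ + Aᵀ * Rc * A
      = ((Sgm * R * Sgm + (1 / 4 : ℝ) • (Θ * R * Θ)).map Complex.ofReal)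
        + ((Sgm * R * Sgm + (1 / 4 : ℝ) • (Θ * R * Θ)).map Complex.ofReal) := by
    have hmap : ((Sgm * R * Sgm + (1 / 4 : ℝ) • (Θ * R * Θ)).map Complex.ofReal)
        = Sc * Rc * Sc + (1 / 4 : ℂ) • (Θc * Rc * Θc) := by
      ext i j
      simp only [Matrix.map_apply, Matrix.add_apply, Matrix.smul_apply, Matrix.mul_apply,
        smul_eq_mul, hSc, hΘc, hRc]
      push_cast
      ring
    rw [hmap, hAT, hA]
    simp only [Matrix.add_mul, Matrix.mul_add, Matrix.sub_mul, Matrix.mul_sub,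
      Matrix.smul_mul, Matrix.mul_smul, smul_smul, smul_sub, smul_add]
    have hI : Complex.I / 2 * (Complex.I / 2) = -(1/4 : ℂ) := by
      rw [div_mul_div_comm, Complex.I_mul_I]; norm_num
    rw [hI]
    module
  set P : Matrix (Fin n) (Fin n) ℂ := A * Rc * Aᵀ + Aᵀ * Rc * A with hP
  have hPpsd : P.PosSemidef := by
    rw [hKRid]
    exact (posSemidef_map_ofReal hKR).add (posSemidef_map_ofReal hKR)
  -- square root of A
  open scoped MatrixOrder in
  set Q : Matrix (Fin n) (Fin n) ℂ := CFC.sqrt A with hQ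
  open scoped MatrixOrder in
  have hQpsd : Q.PosSemidef := (CFC.sqrt_nonneg A).posSemidef
  open scoped MatrixOrder in
  have hQQ : Q * Q = A := CFC.sqrt_mul_sqrt_self A hApd.posSemidef.nonneg
  have hdetQ : IsUnit Q.det := by
    have hQQdet : Q.det * Q.det = A.det := by rw [← Matrix.det_mul, hQQ]
    exact isUnit_iff_ne_zero.mpr fun h0 => hApd.det_pos.ne' (by rw [← hQQdet, h0, mul_zero])
  have hQH : Qᴴ = Q := hQpsd.isHermitian
  have hQiH : Q⁻¹ᴴ = Q⁻¹ := by rw [Matrix.conjTranspose_nonsing_inv, hQH]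
  have hQQi : Q * Q⁻¹ = 1 := Matrix.mul_nonsing_inv Q hdetQ
  have hQiQ : Q⁻¹ * Q = 1 := Matrix.nonsing_inv_mul Q hdetQ
  set W : Matrix (Fin n) (Fin n) ℂ := Q⁻¹ * Aᵀ * Q⁻¹ with hW
  set R' : Matrix (Fin n) (Fin n) ℂ := Q * Rc * Q with hR'
  have hRcH : Rcᴴ = Rc := by
    rw [hRc, map_conjTranspose_real, hR]
  have hR'H : R'.IsHermitian := by
    show R'ᴴ = R'
    rw [hR', Matrix.conjTranspose_mul, Matrix.conjTranspose_mul, hQH, hRcH,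
      Matrix.mul_assoc]
  -- the Lyapunov-type identity
  have hLyap : R' * W + W * R' = Q⁻¹ * P * Q⁻¹ := by
    have hPQ : P = Q * Q * Rc * Aᵀ + Aᵀ * Rc * (Q * Q) := by rw [hP, hQQ]
    rw [hR', hW, hPQ]
    simp only [Matrix.mul_add, Matrix.add_mul, Matrix.mul_assoc,
      Matrix.mul_nonsing_inv_cancel_left Q (h := hdetQ),
      Matrix.nonsing_inv_mul_cancel_left Q (h := hdetQ),
      hQQi, hQiQ, Matrix.mul_one, Matrix.one_mul]
  have hLpsd : (R' * W + W * R').PosSemidef := by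
    rw [hLyap]
    have := hPpsd.mul_mul_conjTranspose_same Q⁻¹
    rwa [hQiH] at this
  -- positivity of W's quadratic form
  have hWquad : ∀ u : Fin n → ℂ, u ≠ 0 → 0 < star u ⬝ᵥ W *ᵥ u := by
    intro u hu
    have hv1 : star u ⬝ᵥ W *ᵥ u = (star u ᵥ* Q⁻¹) ⬝ᵥ (Aᵀ *ᵥ (Q⁻¹ *ᵥ u)) := by
      rw [hW, ← Matrix.mulVec_mulVec, ← Matrix.mulVec_mulVec, Matrix.dotProduct_mulVec]
    have hv2 : star (Q⁻¹ *ᵥ u) = star u ᵥ* Q⁻¹ := by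
      rw [Matrix.star_mulVec, hQiH]
    have hvne : Q⁻¹ *ᵥ u ≠ 0 := by
      intro h0
      apply hu
      have h1 : Q *ᵥ (Q⁻¹ *ᵥ u) = u := by
        rw [Matrix.mulVec_mulVec, hQQi, Matrix.one_mulVec]
      rw [h0, Matrix.mulVec_zero] at h1
      exact h1.symm
    rw [hv1, ← hv2]
    exact hBpd.dotProduct_mulVec_pos hvne
  -- eigenvalues of R' are nonnegative
  have hR'psd : R'.PosSemidef := by
    apply hR'H.posSemidef_iff_eigenvalues_nonneg.mpr
    intro i
    set u : Fin n → ℂ := ⇑(hR'H.eigenvectorBasis i) with hu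
    set lam : ℝ := hR'H.eigenvalues i with hlam
    have hue : R' *ᵥ u = lam • u := hR'H.mulVec_eigenvectorBasis i
    have hune : u ≠ 0 := by
      intro h0
      apply hR'H.eigenvectorBasis.orthonormal.ne_zero i
      ext j
      exact congrFun h0 j
    have hc := hWquad u hune
    set c : ℂ := star u ⬝ᵥ W *ᵥ u with hcdef
    have hquad := hLpsd.dotProduct_mulVec_nonneg u
    have hsu : star u ᵥ* R' = lam • star u := by
      have e1 : star u ᵥ* R' = star (R' *ᵥ u) := by
        conv_lhs => rw [← hR'H.eq]
        rw [← Matrix.star_mulVec]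
      rw [e1, hue, star_smul, star_trivial]
    have hval : star u ⬝ᵥ (R' * W + W * R') *ᵥ u = (2 * lam) • c := by
      have e1 : (R' * W) *ᵥ u = R' *ᵥ (W *ᵥ u) := by rw [Matrix.mulVec_mulVec]
      have e2 : (W * R') *ᵥ u = W *ᵥ (R' *ᵥ u) := by rw [Matrix.mulVec_mulVec]
      have t1 : star u ⬝ᵥ R' *ᵥ (W *ᵥ u) = lam • c := by
        rw [Matrix.dotProduct_mulVec, hsu, smul_dotProduct, ← hcdef]
      have t2 : star u ⬝ᵥ W *ᵥ (R' *ᵥ u) = lam • c := by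
        rw [hue, Matrix.mulVec_smul, dotProduct_smul, ← hcdef]
      rw [Matrix.add_mulVec, dotProduct_add, e1, e2, t1, t2, ← add_smul]
      ring_nf
    rw [hval] at hquad
    have hcre : 0 < c.re ∧ c.im = 0 := by
      have h' := Complex.lt_def.mp hc
      exact ⟨by simpa using h'.1, by simpa using h'.2.symm⟩
    have hqre : 0 ≤ ((2 * lam) • c).re := (Complex.le_def.mp hquad).1.trans_eq' (by simp)
    rw [Complex.real_smul] at hqre
    simp only [Complex.mul_re, Complex.ofReal_re, Complex.ofReal_im, zero_mul, sub_zero] at hqre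
    exact (by nlinarith [hcre.1, hqre] : (0 : ℝ) ≤ lam)
  -- transport back
  have hRcpsd : Rc.PosSemidef := by
    have hRcid : Rc = Q⁻¹ * R' * Q⁻¹ᴴ := by
      rw [hQiH, hR']
      rw [← Matrix.mul_assoc, ← Matrix.mul_assoc, hQiQ, Matrix.one_mul,
        Matrix.mul_assoc, hQQi, Matrix.mul_one]
    rw [hRcid]
    exact hR'psd.mul_mul_conjTranspose_same Q⁻¹
  exact posSemidef_of_map_ofReal hR hRcpsd
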